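/- For r = 4, with u₀ = 0, u₁ = 1, u_{i+2} = 2u_{i+1} - u_i (so u_n = n), the function ρ(n) = 1 + (n-1)/(n+1) satisfies: the only multisets (n₁,…,n_s) of positive integers with ρ(n₁)+⋯+ρ(n_s) = 4 are (1,1,1,1), (2,2,2), (1,3,3), and (1,2,5). -/

import Mathlib

lemma key3 (a b c : ℕ) (ha : 1 ≤ a) (hab : a ≤ b) (hbc : b ≤ c)
    (h : a * b * c = a + b + c + 2) :
    (a = 2 ∧ b = 2 ∧ c = 2) ∨ (a = 1 ∧ b = 3 ∧ c = 3) ∨ (a = 1 ∧ b = 2 ∧ c = 5) := by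
  have hc : 1 ≤ c := le_trans ha (le_trans hab hbc)
  have hab5 : a * b ≤ 5 := by
    have h1 : a * b * c ≤ 5 * c := by nlinarith
    exact Nat.le_of_mul_le_mul_right h1 hc
  have ha2 : a ≤ 2 := by nlinarith
  have hb5 : b ≤ 5 := by nlinarith
  interval_cases a <;> interval_cases b <;> omega

lemma rho_one (rho : ℕ → ℚ) (hrho : ∀ n : ℕ, 1 ≤ n → rho n = 2 * n / (n + 1))
    (n : ℕ) (hn : 1 ≤ n) (h : rho n = 1) : n = 1 := by
  rw [hrho n hn] at h
  have h' : (n:ℚ) + 1 ≠ 0 := by positivity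
  field_simp at h
  have : 2 * n = n + 1 := by exact_mod_cast h
  omega

/-- The only multisets of positive integers with Σ ρ(nᵢ) = 4,
where ρ(n) = 1 + (n-1)/(n+1) = 2n/(n+1), are (1,1,1,1), (2,2,2), (1,3,3), (1,2,5). -/
theorem stmt_2 (rho : ℕ → ℚ) (hrho : ∀ n : ℕ, 1 ≤ n → rho n = 2 * n / (n + 1)) :
    ∀ M : Multiset ℕ, (∀ n ∈ M, 0 < n) →
      ((M.map rho).sum = 4 ↔
        M = {1, 1, 1, 1} ∨ M = {2, 2, 2} ∨ M = {1, 3, 3} ∨ M = {1, 2, 5}) := by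
  intro M hM
  have hge : ∀ n ∈ M, (1:ℚ) ≤ rho n := by
    intro n hn
    have h1 : 1 ≤ n := hM n hn
    have h1' : (1:ℚ) ≤ (n:ℚ) := by exact_mod_cast h1
    rw [hrho n h1, le_div_iff₀ (by positivity)]
    nlinarith
  constructor
  · intro hsum
    have hcard : M.card ≤ 4 := by
      have h1 : (M.map rho).card • (1:ℚ) ≤ (M.map rho).sum := by
        apply Multiset.card_nsmul_le_sum
        intro x hx
        obtain ⟨n, hn, rfl⟩ := Multiset.mem_map.mp hx
        exact hge n hn
      rw [hsum, Multiset.card_map, nsmul_eq_mul, mul_one] at h1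
      exact_mod_cast h1
    have hcases : M.card = 0 ∨ M.card = 1 ∨ M.card = 2 ∨ M.card = 3 ∨ M.card = 4 := by omega
    rcases hcases with h0 | h1 | h2 | h3 | h4
    · rw [Multiset.card_eq_zero] at h0
      subst h0; simp at hsum
    · obtain ⟨a, rfl⟩ := Multiset.card_eq_one.mp h1
      have ha : 1 ≤ a := hM a (by simp)
      simp only [Multiset.map_singleton, Multiset.sum_singleton] at hsum
      rw [hrho a ha] at hsum
      have ha' : (a:ℚ) + 1 ≠ 0 := by positivity
      field_simp at hsum
      have : 2 * a = 4 * (a + 1) := by exact_mod_cast (by linarith [hsum] : (2:ℚ) * a = 4 * ((a:ℚ) + 1))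
      omega
    · obtain ⟨a, b, rfl⟩ := Multiset.card_eq_two.mp h2
      have ha : 1 ≤ a := hM a (by simp)
      have hb : 1 ≤ b := hM b (by simp)
      simp only [Multiset.insert_eq_cons, Multiset.map_cons, Multiset.sum_cons,
        Multiset.map_singleton, Multiset.sum_singleton] at hsum
      rw [hrho a ha, hrho b hb] at hsum
      have ha' : (a:ℚ) + 1 ≠ 0 := by positivity
      have hb' : (b:ℚ) + 1 ≠ 0 := by positivity
      have ha0 : (0:ℚ) ≤ a := Nat.cast_nonneg a
      have hb0 : (0:ℚ) ≤ b := Nat.cast_nonneg b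
      field_simp at hsum
      nlinarith [hsum]
    · -- card 3
      obtain ⟨a, b, c, hl⟩ := List.length_eq_three.mp
        (show (M.sort (· ≤ ·)).length = 3 by rw [Multiset.length_sort]; exact h3)
      have hs := Multiset.pairwise_sort (r := ((· ≤ ·) : ℕ → ℕ → Prop)) (s := M)
      have hMeq : (↑(M.sort (· ≤ ·)) : Multiset ℕ) = M := Multiset.sort_eq _ _
      rw [hl] at hs hMeq
      have hM' : ({a, b, c} : Multiset ℕ) = M := hMeq
      simp only [List.pairwise_cons, List.mem_cons] at hs
      have hab : a ≤ b := by tauto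
      have hbc : b ≤ c := by tauto
      have ha : 1 ≤ a := hM a (by rw [← hM']; simp)
      have hb : 1 ≤ b := hM b (by rw [← hM']; simp)
      have hc : 1 ≤ c := hM c (by rw [← hM']; simp)
      rw [← hM'] at hsum
      simp only [Multiset.insert_eq_cons, Multiset.map_cons, Multiset.sum_cons,
        Multiset.map_singleton, Multiset.sum_singleton] at hsum
      rw [hrho a ha, hrho b hb, hrho c hc] at hsum
      have ha' : (a:ℚ) + 1 ≠ 0 := by positivity
      have hb' : (b:ℚ) + 1 ≠ 0 := by positivity
      have hc' : (c:ℚ) + 1 ≠ 0 := by positivity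
      field_simp at hsum
      have hq : (a:ℚ) * b * c = a + b + c + 2 := by ring_nf at hsum ⊢; linarith
      have hnat : a * b * c = a + b + c + 2 := by exact_mod_cast hq
      rcases key3 a b c ha hab hbc hnat with ⟨h1,h2,h3⟩ | ⟨h1,h2,h3⟩ | ⟨h1,h2,h3⟩ <;>
        subst h1 <;> subst h2 <;> subst h3
      · exact Or.inr (Or.inl hM'.symm)
      · exact Or.inr (Or.inr (Or.inl hM'.symm))
      · exact Or.inr (Or.inr (Or.inr hM'.symm))
    · -- card 4
      have hpos : 0 < M.card := by omega
      obtain ⟨a, ha⟩ := Multiset.card_pos_iff_exists_mem.mp hpos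
      obtain ⟨M', rfl⟩ := Multiset.exists_cons_of_mem ha
      have h3' : M'.card = 3 := by simp at h4; omega
      obtain ⟨x, y, z, rfl⟩ := Multiset.card_eq_three.mp h3'
      have hxa : 1 ≤ a := hM a (by simp)
      have hxx : 1 ≤ x := hM x (by simp)
      have hxy : 1 ≤ y := hM y (by simp)
      have hxz : 1 ≤ z := hM z (by simp)
      have g1 := hge a (by simp)
      have g2 := hge x (by simp)
      have g3 := hge y (by simp)
      have g4 := hge z (by simp)
      simp only [Multiset.insert_eq_cons, Multiset.map_cons, Multiset.sum_cons,
        Multiset.map_singleton, Multiset.sum_singleton] at hsum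
      have e1 : rho a = 1 := by linarith
      have e2 : rho x = 1 := by linarith
      have e3 : rho y = 1 := by linarith
      have e4 : rho z = 1 := by linarith
      have := rho_one rho hrho a hxa e1
      have := rho_one rho hrho x hxx e2
      have := rho_one rho hrho y hxy e3
      have := rho_one rho hrho z hxz e4
      subst this; left
      simp_all
  · intro h
    rcases h with rfl | rfl | rfl | rfl <;>
      simp only [Multiset.insert_eq_cons, Multiset.map_cons, Multiset.sum_cons,
        Multiset.map_singleton, Multiset.sum_singleton]
    · rw [hrho 1 (by norm_num)]; norm_num
    · rw [hrho 2 (by norm_num)]; norm_num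
    · rw [hrho 1 (by norm_num), hrho 3 (by norm_num)]; norm_num
    · rw [hrho 1 (by norm_num), hrho 2 (by norm_num), hrho 5 (by norm_num)]; norm_num
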